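/- If G = Q_n(X) is a daisy cube, then D_{G,0^n}(x,y) = W_{G,0^n}(x + y), where W_{G,0^n} is the counting polynomial of the number of vertices of G at a given distance from 0^n. -/

import Mathlib

def Qcube (n : ℕ) : SimpleGraph (Fin n → Bool) where
  Adj u v := hammingDist u v = 1
  symm := ⟨fun u v (h : hammingDist u v = 1) => by rwa [hammingDist_comm]⟩
  loopless := ⟨fun u h => by simp [hammingDist_self] at h⟩

def daisySet {n : ℕ} (X : Set (Fin n → Bool)) : Set (Fin n → Bool) :=
  {u | ∃ x ∈ X, u ≤ x}

noncomputable def cubeCount {V : Type*} (G : SimpleGraph V) (k : ℕ) : ℕ :=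
  Set.ncard {S : Set V | Nonempty (G.induce S ≃g Qcube k)}

noncomputable def distToSet {V : Type*} (G : SimpleGraph V) (u : V) (S : Set V) : ℕ :=
  sInf (G.dist u '' S)

noncomputable def distCubeCount {V : Type*} (G : SimpleGraph V) (u : V) (k d : ℕ) : ℕ :=
  Set.ncard {S : Set V | Nonempty (G.induce S ≃g Qcube k) ∧ distToSet G u S = d}

noncomputable def wCount {V : Type*} (G : SimpleGraph V) (u : V) (d : ℕ) : ℕ :=
  Set.ncard {v : V | G.dist u v = d}

def interval {V : Type*} (G : SimpleGraph V) (u v : V) : Set V :=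
  {w | G.dist u v = G.dist u w + G.dist w v}

open Finset

namespace DP

variable {n : ℕ}

def bx (u v : Fin n → Bool) : Fin n → Bool := fun i => xor (u i) (v i)
def un (p : Fin n) : Fin n → Bool := fun i => decide (i = p)
def zw : Fin n → Bool := fun _ => false

lemma bx_apply (u v : Fin n → Bool) (i : Fin n) : bx u v i = xor (u i) (v i) := rfl
lemma un_self (p : Fin n) : un (n := n) p p = true := by simp [un]
lemma un_ne {p q : Fin n} (h : q ≠ p) : un p q = false := by simp [un, h]

lemma bx_comm (u v : Fin n → Bool) : bx u v = bx v u := by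
  funext i; simp [bx, Bool.xor_comm]

lemma bx_assoc (u v w : Fin n → Bool) : bx (bx u v) w = bx u (bx v w) := by
  funext i; simp [bx, Bool.xor_assoc]

lemma bx_self (u : Fin n → Bool) : bx u u = zw := by
  funext i; simp [bx, zw]

lemma bx_zw (u : Fin n → Bool) : bx u zw = u := by
  funext i; simp [bx, zw]

lemma zw_bx (u : Fin n → Bool) : bx zw u = u := by
  funext i; simp [bx, zw]

lemma bx_bx_cancel (u v : Fin n → Bool) : bx (bx u v) v = u := by
  rw [bx_assoc, bx_self, bx_zw]

lemma bx_left_cancel {u v w : Fin n → Bool} (h : bx u v = bx u w) : v = w := by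
  funext i
  have := congrFun h i
  simp only [bx] at this
  cases hu : u i <;> rw [hu] at this <;> simpa using this

lemma bx_swap (u a b : Fin n → Bool) : bx (bx u a) b = bx (bx u b) a := by
  rw [bx_assoc, bx_assoc, bx_comm a b]

lemma un_inj {p q : Fin n} (h : un p = un q) : p = q := by
  have := congrFun h p
  simp only [un, decide_eq_true_eq] at this
  by_contra hne
  simp [hne] at this

lemma hd_eq_one_iff {u v : Fin n → Bool} :
    hammingDist u v = 1 ↔ ∃ p, v = bx u (un p) := by
  unfold hammingDist
  rw [Finset.card_eq_one]
  constructor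
  · rintro ⟨p, hp⟩
    refine ⟨p, funext fun q => ?_⟩
    by_cases hq : q = p
    · subst hq
      have hmem : q ∈ ({q} : Finset (Fin n)) := Finset.mem_singleton_self q
      rw [← hp, Finset.mem_filter] at hmem
      have h2 := hmem.2
      simp only [bx, un]
      cases hvq : v q <;> cases huq : u q <;> simp_all
    · have hnm : q ∉ Finset.filter (fun i => u i ≠ v i) Finset.univ := by
        rw [hp]; simp [hq]
      simp only [Finset.mem_filter, Finset.mem_univ, true_and, not_not] at hnm
      simp [bx, un, hq, ← hnm]
  · rintro ⟨p, rfl⟩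
    refine ⟨p, ?_⟩
    ext q
    simp only [Finset.mem_filter, Finset.mem_univ, true_and, Finset.mem_singleton]
    by_cases hq : q = p
    · subst hq; simp [bx, un]
    · simp [bx, un, hq]

lemma hd_bx_un (w : Fin n → Bool) (i : Fin n) : hammingDist w (bx w (un i)) = 1 :=
  hd_eq_one_iff.mpr ⟨i, rfl⟩


def wt (u : Fin n → Bool) : ℕ := (Finset.univ.filter (fun i => u i = true)).card

lemma wt_zw : wt (zw : Fin n → Bool) = 0 := by simp [wt, zw]

lemma eq_zw_of_wt_eq_zero {u : Fin n → Bool} (h : wt u = 0) : u = zw := by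
  funext q
  simp only [wt, Finset.card_eq_zero, Finset.filter_eq_empty_iff] at h
  have := h (Finset.mem_univ q)
  simp only [zw]
  cases hq : u q
  · rfl
  · exact absurd hq this

lemma wt_bx_un_lt {u : Fin n → Bool} {j : Fin n} (h : u j = true) :
    wt (bx u (un j)) < wt u := by
  unfold wt
  have hset : Finset.univ.filter (fun i => bx u (un j) i = true)
      = (Finset.univ.filter (fun i => u i = true)).erase j := by
    ext q
    simp only [Finset.mem_filter, Finset.mem_univ, true_and, Finset.mem_erase]
    by_cases hq : q = j
    · subst hq; simp [bx, un, h]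
    · simp [bx, un_ne hq, hq]
  rw [hset]
  exact Finset.card_erase_lt_of_mem (by simp [h])

lemma wt_induction {P : (Fin n → Bool) → Prop} (h0 : P zw)
    (hstep : ∀ w j, P w → P (bx w (un j))) : ∀ w, P w := by
  suffices H : ∀ m w, wt w = m → P w by
    intro w; exact H (wt w) w rfl
  intro m
  induction m using Nat.strong_induction_on with
  | _ m ih =>
    intro w hw
    rcases Nat.eq_zero_or_pos m with hm | hm
    · subst hm
      rw [eq_zw_of_wt_eq_zero hw]
      exact h0
    · have hne : w ≠ zw := by
        rintro rfl
        rw [wt_zw] at hw; omega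
      have : ∃ j, w j = true := by
        by_contra hc
        push_neg at hc
        exact hne (funext fun q => by simpa [zw] using hc q)
      obtain ⟨j, hj⟩ := this
      have hlt : wt (bx w (un j)) < m := hw ▸ wt_bx_un_lt hj
      have hP := ih _ hlt _ rfl
      have := hstep _ j hP
      rwa [bx_bx_cancel] at this

lemma classify {k : ℕ} (ψ : (Fin k → Bool) → (Fin n → Bool))
    (hinj : Function.Injective ψ)
    (hadj : ∀ w w', hammingDist w w' = 1 → hammingDist (ψ w) (ψ w') = 1) :
    ∃ b t : Fin n → Bool, b ≤ t ∧ hammingDist b t = k ∧ Set.range ψ = Set.Icc b t := by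
  classical
  have hex : ∀ (w : Fin k → Bool) (i : Fin k), ∃ p, ψ (bx w (un i)) = bx (ψ w) (un p) :=
    fun w i => hd_eq_one_iff.mp (hadj _ _ (hd_bx_un w i))
  choose dir hdir using hex
  have hconst : ∀ w j i, dir (bx w (un j)) i = dir w i := by
    intro w j i
    by_cases hij : i = j
    · subst hij
      have h1 : ψ w = bx (ψ (bx w (un i))) (un (dir (bx w (un i)) i)) := by
        have := hdir (bx w (un i)) i
        rwa [bx_bx_cancel] at this
      have h2 : ψ w = bx (ψ (bx w (un i))) (un (dir w i)) := by
        conv_rhs => rw [hdir w i]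
        rw [bx_bx_cancel]
      exact un_inj (bx_left_cancel (h1.symm.trans h2))
    · set r := dir w i with hr
      set p := dir w j with hp
      set s := dir (bx w (un j)) i with hs
      set q := dir (bx w (un i)) j with hq
      have h1 : ψ (bx w (un i)) = bx (ψ w) (un r) := hdir w i
      have h2 : ψ (bx w (un j)) = bx (ψ w) (un p) := hdir w j
      have h3 : ψ (bx (bx w (un j)) (un i)) = bx (bx (ψ w) (un p)) (un s) := by
        rw [hdir, h2]
      have h4 : ψ (bx (bx w (un i)) (un j)) = bx (bx (ψ w) (un r)) (un q) := by
        rw [hdir, h1]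
      have hkey : bx (bx (ψ w) (un p)) (un s) = bx (bx (ψ w) (un r)) (un q) := by
        rw [← h3, ← h4, bx_swap]
      by_contra hrs
      have hrs' : r ≠ s := fun h => hrs h.symm
      have he := congrFun hkey r
      simp only [bx_apply] at he
      rw [un_self, un_ne hrs'] at he
      by_cases hrp : r = p
      · have : bx w (un i) = bx w (un j) := hinj (by rw [h1, h2, hrp])
        exact hij (un_inj (bx_left_cancel this))
      · have hrq : r = q := by
          rw [un_ne hrp] at he
          by_contra hrq
          rw [un_ne hrq] at he
          cases hψ : ψ w r <;> rw [hψ] at he <;> simp at he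
        have hww : bx (bx w (un i)) (un j) = w := by
          apply hinj
          rw [h4, ← hrq, bx_bx_cancel]
        have hei := congrFun hww i
        simp only [bx_apply] at hei
        rw [un_self, un_ne hij] at hei
        cases hwi : w i <;> rw [hwi] at hei <;> simp at hei
  have hglob : ∀ w i, dir w i = dir zw i := by
    have := wt_induction (P := fun w => ∀ i, dir w i = dir zw i)
      (fun _ => rfl) (fun w j hw i => by rw [hconst w j i, hw i])
    exact this
  set c : Fin k → Fin n := fun i => dir zw i with hc
  have hstep : ∀ w i, ψ (bx w (un i)) = bx (ψ w) (un (c i)) := by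
    intro w i
    rw [hdir w i, hglob w i]
  have hcinj : Function.Injective c := by
    intro i j hcc
    by_contra hij
    have e1 : ψ (un i) = bx (ψ zw) (un (c i)) := by
      have := hstep zw i; rwa [zw_bx] at this
    have e2 := hstep (un i) j
    rw [e1, hcc, bx_bx_cancel] at e2
    have h1 := hinj e2
    have h2 := congrFun h1 i
    simp only [bx_apply, zw] at h2
    rw [un_self] at h2
    rw [un_ne (fun h : i = j => hij h)] at h2
    simp at h2
  set F : (Fin k → Bool) → (Fin n → Bool) :=
    fun w q => decide (∃ i, c i = q ∧ w i = true) with hF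
  have hwit : ∀ (v : Fin k → Bool) (j : Fin k),
      (∃ i, c i = c j ∧ v i = true) ↔ v j = true := by
    intro v j
    constructor
    · rintro ⟨i, hci2, hvi⟩
      obtain rfl := hcinj hci2
      exact hvi
    · intro h; exact ⟨j, rfl, h⟩
  have hformula : ∀ w, ψ w = bx (ψ zw) (F w) := by
    refine wt_induction ?_ ?_
    · have hFz : F zw = zw := by
        funext q; simp [hF, zw]
      rw [hFz, bx_zw]
    · intro w j hw
      have hFs : F (bx w (un j)) = bx (F w) (un (c j)) := by
        funext q
        by_cases hq : q = c j
        · subst hq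
          show decide (∃ i, c i = c j ∧ bx w (un j) i = true)
              = xor (decide (∃ i, c i = c j ∧ w i = true)) (un (c j) (c j))
          rw [un_self]
          have hbj : bx w (un j) j = !(w j) := by
            rw [bx_apply, un_self, Bool.xor_true]
          cases hwj : w j with
          | true =>
            have l1 : (decide (∃ i, c i = c j ∧ bx w (un j) i = true)) = false := by
              apply decide_eq_false
              intro hP
              have h2 := (hwit (bx w (un j)) j).mp hP
              rw [hbj, hwj] at h2
              simp at h2
            have l2 : (decide (∃ i, c i = c j ∧ w i = true)) = true :=
              decide_eq_true ((hwit w j).mpr hwj)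
            rw [l1, l2]
            rfl
          | false =>
            have l1 : (decide (∃ i, c i = c j ∧ bx w (un j) i = true)) = true := by
              apply decide_eq_true
              refine (hwit (bx w (un j)) j).mpr ?_
              rw [hbj, hwj]
              rfl
            have l2 : (decide (∃ i, c i = c j ∧ w i = true)) = false := by
              apply decide_eq_false
              intro hP
              have h2 := (hwit w j).mp hP
              rw [hwj] at h2
              simp at h2
            rw [l1, l2]
            rfl
        · show decide (∃ i, c i = q ∧ bx w (un j) i = true)
              = xor (decide (∃ i, c i = q ∧ w i = true)) (un (c j) q)
          have hiff : (∃ i, c i = q ∧ bx w (un j) i = true) ↔ (∃ i, c i = q ∧ w i = true) := by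
            constructor
            · rintro ⟨i, hci, hvi⟩
              refine ⟨i, hci, ?_⟩
              have hijne : i ≠ j := fun h => hq (by rw [← hci, h])
              rwa [bx_apply, un_ne hijne, Bool.xor_false] at hvi
            · rintro ⟨i, hci, hvi⟩
              refine ⟨i, hci, ?_⟩
              have hijne : i ≠ j := fun h => hq (by rw [← hci, h])
              rwa [bx_apply, un_ne hijne, Bool.xor_false]
          rw [un_ne hq, Bool.xor_false]
          by_cases hP : ∃ i, c i = q ∧ w i = true
          · rw [decide_eq_true hP, decide_eq_true (hiff.mpr hP)]
          · rw [decide_eq_false hP, decide_eq_false (fun h => hP (hiff.mp h))]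
      rw [hFs, hstep w j, hw]
      exact bx_assoc _ _ _
  refine ⟨fun q => if ∃ i, c i = q then false else ψ zw q,
          fun q => if ∃ i, c i = q then true else ψ zw q, ?_, ?_, ?_⟩
  · intro q
    by_cases hq : ∃ i, c i = q
    · simp only [if_pos hq]; exact Bool.false_le _
    · simp only [if_neg hq]; exact le_refl _
  · unfold hammingDist
    have hset : (Finset.univ.filter (fun q =>
        (if ∃ i, c i = q then false else ψ zw q) ≠ (if ∃ i, c i = q then true else ψ zw q)))
        = Finset.univ.image c := by
      ext q
      simp only [Finset.mem_filter, Finset.mem_univ, true_and, Finset.mem_image]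
      by_cases hq : ∃ i, c i = q
      · simp only [if_pos hq]
        simpa using hq
      · simp only [if_neg hq]
        constructor
        · intro h; exact absurd rfl h
        · intro h
          refine absurd ?_ hq
          obtain ⟨i, hci⟩ := h
          exact ⟨i, hci⟩
    rw [hset, Finset.card_image_of_injective _ hcinj, Finset.card_univ, Fintype.card_fin]
  · ext v
    constructor
    · rintro ⟨w, rfl⟩
      rw [Set.mem_Icc]
      constructor
      · intro q
        by_cases hq : ∃ i, c i = q
        · simp only [if_pos hq]; exact Bool.false_le _
        · simp only [if_neg hq]
          rw [hformula w]
          have hFq : F w q = false := by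
            apply decide_eq_false
            rintro ⟨i, h1, _⟩
            exact hq ⟨i, h1⟩
          rw [bx_apply, hFq, Bool.xor_false]
      · intro q
        by_cases hq : ∃ i, c i = q
        · simp only [if_pos hq]; exact Bool.le_true _
        · simp only [if_neg hq]
          rw [hformula w]
          have hFq : F w q = false := by
            apply decide_eq_false
            rintro ⟨i, h1, _⟩
            exact hq ⟨i, h1⟩
          rw [bx_apply, hFq, Bool.xor_false]
    · intro hv
      rw [Set.mem_Icc] at hv
      obtain ⟨hbv, hvt⟩ := hv
      refine ⟨fun i => xor (v (c i)) (ψ zw (c i)), ?_⟩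
      rw [hformula]
      funext q
      rw [bx_apply]
      by_cases hq : ∃ i, c i = q
      · obtain ⟨i, rfl⟩ := hq
        have hFv : F (fun i => xor (v (c i)) (ψ zw (c i))) (c i) = xor (v (c i)) (ψ zw (c i)) := by
          show decide (∃ i', c i' = c i ∧ (xor (v (c i')) (ψ zw (c i'))) = true)
              = xor (v (c i)) (ψ zw (c i))
          cases h : xor (v (c i)) (ψ zw (c i)) with
          | false =>
            apply decide_eq_false
            rintro ⟨i', hci2, hvi⟩
            obtain rfl := hcinj hci2
            rw [h] at hvi
            exact Bool.false_ne_true hvi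
          | true =>
            apply decide_eq_true
            exact ⟨i, rfl, h⟩
        rw [hFv]
        cases h1 : v (c i) <;> cases h2 : ψ zw (c i) <;> simp [h1, h2]
      · have hFq : F (fun i => xor (v (c i)) (ψ zw (c i))) q = false := by
          apply decide_eq_false
          rintro ⟨i, h1, _⟩
          exact hq ⟨i, h1⟩
        rw [hFq, Bool.xor_false]
        have h1 := hbv q
        have h2 := hvt q
        simp only [if_neg hq] at h1 h2
        exact (le_antisymm h2 h1).symm

lemma hd_def (u v : Fin n → Bool) :
    hammingDist u v = (Finset.univ.filter (fun i => u i ≠ v i)).card := rfl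

lemma wt_eq_hd (u : Fin n → Bool) : hammingDist zw u = wt u := by
  rw [hd_def, wt]
  congr 1
  ext q
  simp only [Finset.mem_filter, Finset.mem_univ, true_and, zw]
  cases h : u q <;> simp [h]

lemma wt_le (u : Fin n → Bool) : wt u ≤ n := by
  calc wt u ≤ Finset.univ.card := Finset.card_filter_le _ _
  _ = n := by simp

lemma wt_mono {u v : Fin n → Bool} (h : u ≤ v) : wt u ≤ wt v := by
  apply Finset.card_le_card
  intro q hq
  simp only [Finset.mem_filter, Finset.mem_univ, true_and] at hq ⊢
  have := h q
  rw [hq] at this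
  exact Bool.eq_true_of_true_le this

lemma bool_le_ne {a b : Bool} (h1 : a ≤ b) (h2 : a ≠ b) : a = false ∧ b = true := by
  cases a <;> cases b
  · exact absurd rfl h2
  · exact ⟨rfl, rfl⟩
  · exact absurd h1 (by decide)
  · exact absurd rfl h2

lemma exists_true_of_wt_ne_zero {u : Fin n → Bool} (h : wt u ≠ 0) : ∃ j, u j = true := by
  by_contra hc
  push_neg at hc
  apply h
  have hu : u = zw := funext fun q => by simpa [zw] using hc q
  rw [hu, wt_zw]

lemma daisy_down {X : Set (Fin n → Bool)} {u v : Fin n → Bool} (h : u ≤ v)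
    (hv : v ∈ daisySet X) : u ∈ daisySet X := by
  obtain ⟨x, hx, hvx⟩ := hv
  exact ⟨x, hx, le_trans h hvx⟩

def ivmap {n k : ℕ} (b t : Fin n → Bool) (σ : {q : Fin n // b q ≠ t q} ≃ Fin k)
    (w : Fin k → Bool) : Fin n → Bool :=
  fun q => if h : b q ≠ t q then w (σ ⟨q, h⟩) else b q

lemma ivmap_pos {k : ℕ} {b t : Fin n → Bool} (σ : {q : Fin n // b q ≠ t q} ≃ Fin k)
    (w : Fin k → Bool) {q : Fin n} (h : b q ≠ t q) : ivmap b t σ w q = w (σ ⟨q, h⟩) :=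
  dif_pos h

lemma ivmap_neg {k : ℕ} {b t : Fin n → Bool} (σ : {q : Fin n // b q ≠ t q} ≃ Fin k)
    (w : Fin k → Bool) {q : Fin n} (h : ¬ b q ≠ t q) : ivmap b t σ w q = b q :=
  dif_neg h

lemma ivmap_hd {k : ℕ} {b t : Fin n → Bool} (σ : {q : Fin n // b q ≠ t q} ≃ Fin k)
    (w w' : Fin k → Bool) :
    hammingDist (ivmap b t σ w) (ivmap b t σ w') = hammingDist w w' := by
  rw [hd_def, hd_def]
  have himg : Finset.univ.filter (fun q => ivmap b t σ w q ≠ ivmap b t σ w' q)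
      = (Finset.univ.filter (fun i => w i ≠ w' i)).image (fun i => (σ.symm i).1) := by
    ext q
    simp only [Finset.mem_filter, Finset.mem_univ, true_and, Finset.mem_image]
    constructor
    · intro hne
      by_cases h : b q ≠ t q
      · refine ⟨σ ⟨q, h⟩, ?_, ?_⟩
        · rw [ivmap_pos σ w h, ivmap_pos σ w' h] at hne
          exact hne
        · rw [Equiv.symm_apply_apply]
      · rw [ivmap_neg σ w h, ivmap_neg σ w' h] at hne
        exact absurd rfl hne
    · rintro ⟨i, hi, rfl⟩
      have hprop := (σ.symm i).2
      rw [ivmap_pos σ w hprop, ivmap_pos σ w' hprop]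
      have : (⟨(σ.symm i).1, hprop⟩ : {q : Fin n // b q ≠ t q}) = σ.symm i := rfl
      rw [this, Equiv.apply_symm_apply]
      exact hi
  rw [himg, Finset.card_image_of_injective]
  intro i j hij
  exact σ.symm.injective (Subtype.ext hij)

lemma ivmap_le {k : ℕ} {b t : Fin n → Bool} (hbt : b ≤ t)
    (σ : {q : Fin n // b q ≠ t q} ≃ Fin k) (w : Fin k → Bool) :
    b ≤ ivmap b t σ w ∧ ivmap b t σ w ≤ t := by
  constructor
  · intro q
    by_cases h : b q ≠ t q
    · rw [ivmap_pos σ w h, (bool_le_ne (hbt q) h).1]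
      exact Bool.false_le _
    · rw [ivmap_neg σ w h]
  · intro q
    by_cases h : b q ≠ t q
    · rw [ivmap_pos σ w h, (bool_le_ne (hbt q) h).2]
      exact Bool.le_true _
    · rw [ivmap_neg σ w h]
      rw [not_not] at h
      exact le_of_eq h

lemma ivmap_surj {k : ℕ} {b t : Fin n → Bool}
    (σ : {q : Fin n // b q ≠ t q} ≃ Fin k) {u : Fin n → Bool} (hbu : b ≤ u) (hut : u ≤ t) :
    ∃ w, ivmap b t σ w = u := by
  refine ⟨fun i => u ((σ.symm i).1), funext fun q => ?_⟩
  by_cases h : b q ≠ t q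
  · rw [ivmap_pos _ _ h]
    have : σ.symm (σ ⟨q, h⟩) = ⟨q, h⟩ := Equiv.symm_apply_apply _ _
    rw [this]
  · rw [ivmap_neg _ _ h]
    rw [not_not] at h
    exact le_antisymm (hbu q) (h ▸ hut q)

variable {X : Set (Fin n → Bool)}

lemma daisy_adj {S : Set ↥(daisySet X)} (a b : ↥S) :
    ((((Qcube n).induce (daisySet X)).induce S)).Adj a b ↔ hammingDist a.1.1 b.1.1 = 1 :=
  Iff.rfl

lemma cube_iff {k : ℕ} (S : Set ↥(daisySet X)) :
    Nonempty ((((Qcube n).induce (daisySet X)).induce S) ≃g Qcube k) ↔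
    ∃ b t : Fin n → Bool, b ≤ t ∧ hammingDist b t = k ∧ t ∈ daisySet X ∧
      S = {u : ↥(daisySet X) | b ≤ u.1 ∧ u.1 ≤ t} := by
  constructor
  · rintro ⟨e⟩
    set ψ : (Fin k → Bool) → (Fin n → Bool) := fun w => ((e.symm w : ↥S) : ↥(daisySet X)).1
      with hψ
    have hinj : Function.Injective ψ := by
      intro a b h
      exact e.symm.toEquiv.injective (Subtype.ext (Subtype.ext h))
    have hadj : ∀ w w', hammingDist w w' = 1 → hammingDist (ψ w) (ψ w') = 1 := by
      intro w w' h
      have : (Qcube k).Adj w w' := h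
      exact (e.symm.map_rel_iff.mpr this : _)
    obtain ⟨b, t, hbt, hk, hrange⟩ := classify ψ hinj hadj
    have htr : t ∈ Set.range ψ := by
      rw [hrange]; exact Set.mem_Icc.mpr ⟨hbt, le_refl _⟩
    obtain ⟨wt', hwt'⟩ := htr
    refine ⟨b, t, hbt, hk, ?_, ?_⟩
    · rw [← hwt']
      exact ((e.symm wt' : ↥S) : ↥(daisySet X)).2
    · ext u
      simp only [Set.mem_setOf_eq]
      constructor
      · intro hu
        have : ψ (e ⟨u, hu⟩) = u.1 := by
          rw [hψ]
          simp only []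
          rw [e.symm_apply_apply]
        have hmem : u.1 ∈ Set.Icc b t := by
          rw [← hrange]
          exact ⟨e ⟨u, hu⟩, this⟩
        exact Set.mem_Icc.mp hmem
      · intro hu
        have hmem : u.1 ∈ Set.range ψ := by
          rw [hrange]
          exact Set.mem_Icc.mpr hu
        obtain ⟨w, hw⟩ := hmem
        have : (e.symm w : ↥S).1 = u := Subtype.ext hw
        rw [← this]
        exact (e.symm w).2
  · rintro ⟨b, t, hbt, hk, ht, rfl⟩
    have hcard : Fintype.card {q : Fin n // b q ≠ t q} = k := by
      rw [Fintype.card_subtype]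
      exact hk
    set σ := Fintype.equivFinOfCardEq hcard with hσ
    have hmem : ∀ w, ivmap b t σ w ∈ daisySet X := fun w =>
      daisy_down (ivmap_le hbt σ w).2 ht
    set g : (Fin k → Bool) → ↥{u : ↥(daisySet X) | b ≤ u.1 ∧ u.1 ≤ t} :=
      fun w => ⟨⟨ivmap b t σ w, hmem w⟩, (ivmap_le hbt σ w).1, (ivmap_le hbt σ w).2⟩
      with hg
    have hbij : Function.Bijective g := by
      constructor
      · intro w w' h
        have h1 : ivmap b t σ w = ivmap b t σ w' :=
          congrArg (fun z => z.1.1) h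
        have h2 : hammingDist w w' = 0 := by
          rw [← ivmap_hd σ w w', h1, hammingDist_self]
        exact eq_of_hammingDist_eq_zero h2
      · rintro ⟨⟨u, hu⟩, hbu, hut⟩
        obtain ⟨w, hw⟩ := ivmap_surj σ hbu hut
        exact ⟨w, Subtype.ext (Subtype.ext hw)⟩
    set E := Equiv.ofBijective g hbij with hE
    have hiso : ∀ w w',
        ((((Qcube n).induce (daisySet X)).induce {u : ↥(daisySet X) | b ≤ u.1 ∧ u.1 ≤ t})).Adj
          (E w) (E w') ↔ (Qcube k).Adj w w' := by
      intro w w'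
      rw [daisy_adj]
      have h1 : (E w).1.1 = ivmap b t σ w := rfl
      have h2 : (E w').1.1 = ivmap b t σ w' := rfl
      rw [h1, h2, ivmap_hd σ w w']
      exact Iff.rfl
    have iso : (Qcube k) ≃g
        (((Qcube n).induce (daisySet X)).induce {u : ↥(daisySet X) | b ≤ u.1 ∧ u.1 ≤ t}) :=
      ⟨E, fun {w w'} => hiso w w'⟩
    exact ⟨iso.symm⟩

lemma exists_walk (h0 : zw ∈ daisySet X) (v : ↥(daisySet X)) :
    ∃ p : ((Qcube n).induce (daisySet X)).Walk ⟨zw, h0⟩ v, p.length = wt v.1 := by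
  suffices H : ∀ m (v : ↥(daisySet X)), wt v.1 = m →
      ∃ p : ((Qcube n).induce (daisySet X)).Walk ⟨zw, h0⟩ v, p.length = m by
    obtain ⟨p, hp⟩ := H (wt v.1) v rfl
    exact ⟨p, hp⟩
  intro m
  induction m using Nat.strong_induction_on with
  | _ m ih =>
    intro v hv
    rcases Nat.eq_zero_or_pos m with hm | hm
    · subst hm
      have : (⟨zw, h0⟩ : ↥(daisySet X)) = v := Subtype.ext (eq_zw_of_wt_eq_zero hv).symm
      subst this
      exact ⟨SimpleGraph.Walk.nil, rfl⟩
    · obtain ⟨j, hj⟩ := exists_true_of_wt_ne_zero (u := v.1) (by omega)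
      set v' : Fin n → Bool := bx v.1 (un j) with hv'
      have hle : v' ≤ v.1 := by
        intro q
        by_cases hq : q = j
        · subst hq
          rw [hv', bx_apply, un_self, hj]
          exact Bool.false_le _
        · rw [hv', bx_apply, un_ne hq, Bool.xor_false]
      have hvd : v' ∈ daisySet X := daisy_down hle v.2
      have hwt' : wt v' = m - 1 := by
        have hlt := wt_bx_un_lt hj
        have hset : Finset.univ.filter (fun i => v' i = true)
            = (Finset.univ.filter (fun i => v.1 i = true)).erase j := by
          ext q
          simp only [Finset.mem_filter, Finset.mem_univ, true_and, Finset.mem_erase]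
          by_cases hq : q = j
          · subst hq
            rw [hv', bx_apply, un_self, hj]
            simp
          · rw [hv', bx_apply, un_ne hq, Bool.xor_false]
            simp [hq]
        show (Finset.univ.filter (fun i => v' i = true)).card = m - 1
        rw [hset, Finset.card_erase_of_mem (by simp [hj])]
        rw [← hv]
        rfl
      obtain ⟨p, hp⟩ := ih (m - 1) (by omega) ⟨v', hvd⟩ hwt'
      have hadj : ((Qcube n).induce (daisySet X)).Adj ⟨v', hvd⟩ v := by
        show hammingDist v' v.1 = 1
        apply hd_eq_one_iff.mpr
        exact ⟨j, (bx_bx_cancel v.1 (un j)).symm⟩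
      refine ⟨p.concat hadj, ?_⟩
      rw [SimpleGraph.Walk.length_concat, hp]
      omega

lemma hd_le_length {a b : ↥(daisySet X)} (p : ((Qcube n).induce (daisySet X)).Walk a b) :
    hammingDist a.1 b.1 ≤ p.length := by
  induction p with
  | nil => simp
  | @cons a c b h q ih =>
    have h1 : hammingDist a.1 c.1 = 1 := h
    calc hammingDist a.1 b.1 ≤ hammingDist a.1 c.1 + hammingDist c.1 b.1 :=
          hammingDist_triangle _ _ _
    _ ≤ 1 + q.length := by rw [h1]; omega
    _ = (SimpleGraph.Walk.cons h q).length := by rw [SimpleGraph.Walk.length_cons]; omega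

lemma dist_eq_wt (h0 : zw ∈ daisySet X) (v : ↥(daisySet X)) :
    ((Qcube n).induce (daisySet X)).dist ⟨zw, h0⟩ v = wt v.1 := by
  obtain ⟨p, hp⟩ := exists_walk h0 v
  apply le_antisymm
  · rw [← hp]
    exact SimpleGraph.dist_le p
  · have hr : ((Qcube n).induce (daisySet X)).Reachable ⟨zw, h0⟩ v := ⟨p⟩
    obtain ⟨q, hq⟩ := hr.exists_walk_length_eq_dist
    calc wt v.1 = hammingDist zw v.1 := (wt_eq_hd v.1).symm
    _ ≤ q.length := hd_le_length q
    _ = _ := hq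

lemma distToSet_Icc (h0 : zw ∈ daisySet X) {b t : Fin n → Bool} (hbt : b ≤ t)
    (ht : t ∈ daisySet X) :
    distToSet ((Qcube n).induce (daisySet X)) ⟨zw, h0⟩
      {u : ↥(daisySet X) | b ≤ u.1 ∧ u.1 ≤ t} = wt b := by
  unfold distToSet
  have hbd : b ∈ daisySet X := daisy_down hbt ht
  have hbmem : (⟨b, hbd⟩ : ↥(daisySet X)) ∈ {u : ↥(daisySet X) | b ≤ u.1 ∧ u.1 ≤ t} :=
    ⟨le_refl _, hbt⟩
  apply le_antisymm
  · exact Nat.sInf_le ⟨_, hbmem, dist_eq_wt h0 _⟩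
  · apply le_csInf ⟨_, Set.mem_image_of_mem _ hbmem⟩
    rintro m ⟨u, hu, rfl⟩
    rw [dist_eq_wt h0 u]
    exact wt_mono hu.1

def suppF (v : Fin n → Bool) : Finset (Fin n) := Finset.univ.filter (fun q => v q = true)

lemma mem_suppF {v : Fin n → Bool} {q : Fin n} : q ∈ suppF v ↔ v q = true := by
  simp [suppF]

lemma wt_eq_card_suppF (v : Fin n → Bool) : wt v = (suppF v).card := rfl

def clearF (v : Fin n → Bool) (A : Finset (Fin n)) : Fin n → Bool :=
  fun q => if q ∈ A then false else v q

lemma clearF_le (v : Fin n → Bool) (A : Finset (Fin n)) : clearF v A ≤ v := by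
  intro q
  unfold clearF
  split
  · exact Bool.false_le _
  · exact le_refl _

lemma hd_clearF {v : Fin n → Bool} {A : Finset (Fin n)} (hA : A ⊆ suppF v) :
    hammingDist (clearF v A) v = A.card := by
  rw [hd_def]
  congr 1
  ext q
  simp only [Finset.mem_filter, Finset.mem_univ, true_and]
  by_cases hq : q ∈ A
  · have hv : v q = true := mem_suppF.mp (hA hq)
    simp [clearF, hq, hv]
  · simp [clearF, hq]

lemma suppF_clearF {v : Fin n → Bool} (A : Finset (Fin n)) :
    suppF (clearF v A) = suppF v \ A := by
  ext q
  simp only [mem_suppF, Finset.mem_sdiff]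
  by_cases hq : q ∈ A <;> simp [clearF, hq, mem_suppF]

lemma wt_clearF {v : Fin n → Bool} {A : Finset (Fin n)} (hA : A ⊆ suppF v) :
    wt (clearF v A) = wt v - A.card := by
  rw [wt_eq_card_suppF, wt_eq_card_suppF, suppF_clearF, Finset.card_sdiff_of_subset hA]

lemma clearF_inj {v : Fin n → Bool} {A A' : Finset (Fin n)} (hA : A ⊆ suppF v)
    (hA' : A' ⊆ suppF v) (h : clearF v A = clearF v A') : A = A' := by
  ext q
  constructor
  · intro h1
    by_contra h2
    have hc := congrFun h q
    have hv : v q = true := mem_suppF.mp (hA h1)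
    simp [clearF, h1, h2, hv] at hc
  · intro h2
    by_contra h1
    have hc := congrFun h q
    have hv : v q = true := mem_suppF.mp (hA' h2)
    simp [clearF, h1, h2, hv] at hc

lemma wt_split {b t : Fin n → Bool} (hbt : b ≤ t) :
    wt t = wt b + hammingDist b t := by
  have hdisj : Disjoint (Finset.univ.filter (fun q => b q = true))
      (Finset.univ.filter (fun q => b q ≠ t q)) := by
    rw [Finset.disjoint_filter]
    intro q _ hb ht2
    have h2 := Bool.eq_true_of_true_le (hb ▸ hbt q)
    exact ht2 (hb.trans h2.symm)
  have hun : Finset.univ.filter (fun q => t q = true)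
      = Finset.univ.filter (fun q => b q = true) ∪
        Finset.univ.filter (fun q => b q ≠ t q) := by
    ext q
    simp only [Finset.mem_filter, Finset.mem_univ, true_and, Finset.mem_union]
    have hle := hbt q
    constructor
    · intro ht3
      cases hb2 : b q
      · right; simp [hb2, ht3]
      · left; rfl
    · rintro (h3 | h3)
      · exact Bool.eq_true_of_true_le (h3 ▸ hle)
      · exact (bool_le_ne hle h3).2
  rw [wt, wt, hd_def, hun, Finset.card_union_of_disjoint hdisj]

lemma clearF_filter_ne {b t : Fin n → Bool} (hbt : b ≤ t) :
    clearF t (Finset.univ.filter (fun q => b q ≠ t q)) = b := by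
  funext q
  by_cases hq : b q ≠ t q
  · have := bool_le_ne (hbt q) hq
    simp [clearF, hq, this.1]
  · rw [not_not] at hq
    simp only [clearF, Finset.mem_filter, Finset.mem_univ, true_and]
    rw [if_neg (by rw [hq]; simp), hq]

lemma distCubeCount_eq (h0 : zw ∈ daisySet X) (k d : ℕ) :
    distCubeCount ((Qcube n).induce (daisySet X)) ⟨zw, h0⟩ k d
      = (k + d).choose k * wCount ((Qcube n).induce (daisySet X)) ⟨zw, h0⟩ (k + d) := by
  classical
  set G := (Qcube n).induce (daisySet X) with hG
  set u0 : ↥(daisySet X) := ⟨zw, h0⟩ with hu0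
  set T := {p : ↥(daisySet X) × Finset (Fin n) //
      wt p.1.1 = k + d ∧ p.2 ⊆ suppF p.1.1 ∧ p.2.card = k} with hT
  set Cset := {S : Set ↥(daisySet X) |
      Nonempty ((G.induce S) ≃g Qcube k) ∧ distToSet G u0 S = d} with hC
  have hΨdef : ∀ p : T, clearF p.1.1.1 p.1.2 ≤ p.1.1.1 := fun p => clearF_le _ _
  have hwtb : ∀ p : T, wt (clearF p.1.1.1 p.1.2) = d := by
    intro p
    rw [wt_clearF p.2.2.1, p.2.1, p.2.2.2]
    omega
  have hΨmem : ∀ p : T,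
      {u : ↥(daisySet X) | clearF p.1.1.1 p.1.2 ≤ u.1 ∧ u.1 ≤ p.1.1.1} ∈ Cset := by
    rintro ⟨⟨v, A⟩, h1, h2, h3⟩
    constructor
    · rw [hG, cube_iff]
      refine ⟨clearF v.1 A, v.1, clearF_le _ _, ?_, v.2, rfl⟩
      rw [hd_clearF h2, h3]
    · rw [hG, hu0, distToSet_Icc h0 (clearF_le _ _) v.2]
      exact hwtb ⟨⟨v, A⟩, h1, h2, h3⟩
  set Ψ : T → ↥Cset := fun p => ⟨_, hΨmem p⟩ with hΨ
  have hbij : Function.Bijective Ψ := by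
    constructor
    · rintro ⟨⟨v, A⟩, h1, h2, h3⟩ ⟨⟨v', A'⟩, h1', h2', h3'⟩ heq
      have hSeq : {u : ↥(daisySet X) | clearF v.1 A ≤ u.1 ∧ u.1 ≤ v.1}
          = {u : ↥(daisySet X) | clearF v'.1 A' ≤ u.1 ∧ u.1 ≤ v'.1} :=
        congrArg Subtype.val heq
      have hvv : v = v' := by
        have hm1 : v ∈ {u : ↥(daisySet X) | clearF v.1 A ≤ u.1 ∧ u.1 ≤ v.1} :=
          ⟨clearF_le _ _, le_refl _⟩
        have hm2 : v' ∈ {u : ↥(daisySet X) | clearF v'.1 A' ≤ u.1 ∧ u.1 ≤ v'.1} :=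
          ⟨clearF_le _ _, le_refl _⟩
        rw [hSeq] at hm1
        rw [← hSeq] at hm2
        exact Subtype.ext (le_antisymm hm1.2 hm2.2)
      subst hvv
      have hb1 : (⟨clearF v.1 A, daisy_down (clearF_le _ _) v.2⟩ : ↥(daisySet X))
          ∈ {u : ↥(daisySet X) | clearF v.1 A ≤ u.1 ∧ u.1 ≤ v.1} :=
        ⟨le_refl _, clearF_le _ _⟩
      have hb2 : (⟨clearF v.1 A', daisy_down (clearF_le _ _) v.2⟩ : ↥(daisySet X))
          ∈ {u : ↥(daisySet X) | clearF v.1 A' ≤ u.1 ∧ u.1 ≤ v.1} :=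
        ⟨le_refl _, clearF_le _ _⟩
      rw [hSeq] at hb1
      rw [← hSeq] at hb2
      have hcc : clearF v.1 A = clearF v.1 A' := le_antisymm hb2.1 hb1.1
      have : A = A' := clearF_inj h2 h2' hcc
      subst this
      rfl
    · rintro ⟨S, hcube, hdist⟩
      obtain ⟨b, t, hbt, hk, ht, hS⟩ := (cube_iff S).mp hcube
      have hwtbd : wt b = d := by
        rw [hS] at hdist
        rw [hG, hu0, distToSet_Icc h0 hbt ht] at hdist
        exact hdist
      set A := Finset.univ.filter (fun q => b q ≠ t q) with hA
      have hAsupp : A ⊆ suppF t := by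
        intro q hq
        rw [hA, Finset.mem_filter] at hq
        exact mem_suppF.mpr (bool_le_ne (hbt q) hq.2).2
      have hAcard : A.card = k := hk
      have hwtt : wt t = k + d := by
        rw [wt_split hbt, hwtbd, hk]
        omega
      have hclear : clearF t A = b := clearF_filter_ne hbt
      refine ⟨⟨⟨⟨t, ht⟩, A⟩, hwtt, hAsupp, hAcard⟩, ?_⟩
      apply Subtype.ext
      show {u : ↥(daisySet X) | clearF t A ≤ u.1 ∧ u.1 ≤ t} = S
      rw [hclear, hS]
  -- now cardinalities
  letI : Fintype ↥(daisySet X) := Fintype.ofFinite _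
  have hcount : distCubeCount G u0 k d = Nat.card T := by
    unfold distCubeCount
    rw [← Nat.card_coe_set_eq]
    exact (Nat.card_congr (Equiv.ofBijective Ψ hbij)).symm
  rw [hcount]
  have hsig : Nat.card T = Nat.card
      ((v : {v : ↥(daisySet X) // wt v.1 = k + d}) ×
        {A : Finset (Fin n) // A ⊆ suppF v.1.1 ∧ A.card = k}) := by
    apply Nat.card_congr
    exact {
      toFun := fun p => ⟨⟨p.1.1, p.2.1⟩, ⟨p.1.2, p.2.2.1, p.2.2.2⟩⟩
      invFun := fun z => ⟨⟨z.1.1, z.2.1⟩, z.1.2, z.2.2.1, z.2.2.2⟩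
      left_inv := fun p => rfl
      right_inv := fun z => rfl }
  rw [hsig]
  have hfib : ∀ v : {v : ↥(daisySet X) // wt v.1 = k + d},
      Nat.card {A : Finset (Fin n) // A ⊆ suppF v.1.1 ∧ A.card = k} = (k + d).choose k := by
    intro v
    have he : {A : Finset (Fin n) // A ⊆ suppF v.1.1 ∧ A.card = k}
        ≃ {A : Finset (Fin n) // A ∈ (suppF v.1.1).powersetCard k} :=
      Equiv.subtypeEquivRight (fun A => (Finset.mem_powersetCard).symm)
    rw [Nat.card_congr he, Nat.card_eq_fintype_card, Fintype.card_coe,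
        Finset.card_powersetCard, ← wt_eq_card_suppF, v.2]
  rw [Nat.card_eq_fintype_card, Fintype.card_sigma]
  have : ∀ v : {v : ↥(daisySet X) // wt v.1 = k + d},
      Fintype.card {A : Finset (Fin n) // A ⊆ suppF v.1.1 ∧ A.card = k} = (k + d).choose k := by
    intro v
    rw [← Nat.card_eq_fintype_card]
    exact hfib v
  rw [Finset.sum_congr rfl (fun v _ => this v), Finset.sum_const, Finset.card_univ,
      smul_eq_mul, mul_comm]
  congr 1
  unfold wCount
  have hset : {v : ↥(daisySet X) | G.dist u0 v = k + d}
      = {v : ↥(daisySet X) | wt v.1 = k + d} := by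
    ext v
    simp only [Set.mem_setOf_eq]
    rw [hG, hu0, dist_eq_wt h0 v]
  rw [hset, ← Nat.card_coe_set_eq, ← Nat.card_eq_fintype_card]
  exact Nat.card_congr (Equiv.subtypeEquivRight fun v => Iff.rfl)

lemma wCount_vanish (h0 : zw ∈ daisySet X) {m : ℕ} (hm : n < m) :
    wCount ((Qcube n).induce (daisySet X)) ⟨zw, h0⟩ m = 0 := by
  unfold wCount
  convert Set.ncard_empty (↥(daisySet X))
  ext v
  simp only [Set.mem_setOf_eq, Set.mem_empty_iff_false, iff_false]
  intro h
  rw [dist_eq_wt h0 v] at h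
  have := wt_le v.1
  omega

end DP

theorem distCubePolynomial_of_daisy_cube_eq_W (n : ℕ)
    (X : Set (Fin n → Bool)) (h0 : (fun _ => false) ∈ daisySet X) (x y : ℝ) :
    ∑ k ∈ Finset.range (2 ^ n + 1), ∑ d ∈ Finset.range (2 ^ n + 1),
      (distCubeCount ((Qcube n).induce (daisySet X)) ⟨fun _ => false, h0⟩ k d : ℝ)
        * x ^ k * y ^ d =
    ∑ d ∈ Finset.range (2 ^ n + 1),
      (wCount ((Qcube n).induce (daisySet X)) ⟨fun _ => false, h0⟩ d : ℝ) * (x + y) ^ d := by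
  classical
  have hnN : n ≤ 2 ^ n := Nat.le_of_lt (Nat.lt_two_pow_self (n := n))
  set N := 2 ^ n with hN
  set W : ℕ → ℕ := fun m =>
    wCount ((Qcube n).induce (daisySet X)) ⟨fun _ => false, h0⟩ m with hW
  have hcc : ∀ k d : ℕ,
      distCubeCount ((Qcube n).induce (daisySet X)) ⟨fun _ => false, h0⟩ k d
        = (k + d).choose k * W (k + d) :=
    fun k d => DP.distCubeCount_eq h0 k d
  have hvan : ∀ m, n < m → W m = 0 := fun m hm => DP.wCount_vanish h0 hm
  calc
    ∑ k ∈ Finset.range (N + 1), ∑ d ∈ Finset.range (N + 1),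
        (distCubeCount ((Qcube n).induce (daisySet X)) ⟨fun _ => false, h0⟩ k d : ℝ)
          * x ^ k * y ^ d
      = ∑ p ∈ (Finset.range (N + 1)) ×ˢ (Finset.range (N + 1)),
          (((p.1 + p.2).choose p.1 : ℝ) * (W (p.1 + p.2) : ℝ)) * x ^ p.1 * y ^ p.2 := by
        rw [Finset.sum_product]
        refine Finset.sum_congr rfl fun k _ => Finset.sum_congr rfl fun d _ => ?_
        rw [hcc k d]
        push_cast
        ring
    _ = ∑ p ∈ ((Finset.range (N + 1)) ×ˢ (Finset.range (N + 1))).filter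
          (fun p => p.1 + p.2 ≤ N),
          (((p.1 + p.2).choose p.1 : ℝ) * (W (p.1 + p.2) : ℝ)) * x ^ p.1 * y ^ p.2 := by
        symm
        apply Finset.sum_subset (Finset.filter_subset _ _)
        intro p hp hnp
        have hgt : N < p.1 + p.2 := by
          by_contra hle
          exact hnp (Finset.mem_filter.mpr ⟨hp, by omega⟩)
        rw [hvan _ (by omega)]
        simp
    _ = ∑ q ∈ (Finset.range (N + 1)).sigma (fun m => Finset.range (m + 1)),
          ((q.1.choose q.2 : ℝ) * (W q.1 : ℝ)) * x ^ q.2 * y ^ (q.1 - q.2) := by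
        refine Finset.sum_nbij' (i := fun p => ⟨p.1 + p.2, p.1⟩)
          (j := fun q => (q.2, q.1 - q.2)) ?_ ?_ ?_ ?_ ?_
        · intro p hp
          rw [Finset.mem_filter, Finset.mem_product, Finset.mem_range, Finset.mem_range] at hp
          have h1 : p.1 + p.2 < N + 1 := by omega
          have h2 : p.1 < p.1 + p.2 + 1 := by omega
          exact Finset.mem_sigma.mpr ⟨Finset.mem_range.mpr h1, Finset.mem_range.mpr h2⟩
        · intro q hq
          rw [Finset.mem_sigma, Finset.mem_range, Finset.mem_range] at hq
          have h1 : q.2 < N + 1 := by omega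
          have h2 : q.1 - q.2 < N + 1 := by omega
          have h3 : q.2 + (q.1 - q.2) ≤ N := by omega
          exact Finset.mem_filter.mpr
            ⟨Finset.mem_product.mpr ⟨Finset.mem_range.mpr h1, Finset.mem_range.mpr h2⟩, h3⟩
        · intro p hp
          simp
        · intro q hq
          rw [Finset.mem_sigma, Finset.mem_range, Finset.mem_range] at hq
          ext
          · simp; omega
          · simp
        · intro p hp
          simp
    _ = ∑ m ∈ Finset.range (N + 1), (W m : ℝ) * (x + y) ^ m := by
        rw [Finset.sum_sigma]
        refine Finset.sum_congr rfl fun m _ => ?_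
        rw [add_pow, Finset.mul_sum]
        refine Finset.sum_congr rfl fun j hj => ?_
        push_cast
        ring
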